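/- arXiv:1310.3204 — 4 statements merged into one kernel-verified Lean document; each statement's English description precedes it below -/
import Mathlib

section
/- If λ₁, λ₂, ..., λₙ are the adjacency eigenvalues of a graph G, then the adjacency eigenvalues of the extended double cover G* are ±(λ₁+1), ±(λ₂+1), ..., ±(λₙ+1). -/
open Matrix Polynomial BigOperators
open scoped Classical

lemma det_fromBlocks_symm_aux {m : Type*} [Fintype m] [DecidableEq m] {R : Type*} [CommRing R]
    (a b : Matrix m m R) :
    (Matrix.fromBlocks a b b a).det = (a - b).det * (a + b).det := by
  have h : (Matrix.fromBlocks (1 : Matrix m m R) 0 1 1) * Matrix.fromBlocks a b b a *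
      Matrix.fromBlocks 1 0 (-1) 1 = Matrix.fromBlocks (a - b) b 0 (a + b) := by
    simp [Matrix.fromBlocks_multiply, Matrix.fromBlocks_inj]
    refine ⟨by abel, by abel, by abel⟩
  have hd := congrArg Matrix.det h
  rw [Matrix.det_mul, Matrix.det_mul, Matrix.det_fromBlocks_zero₁₂,
    Matrix.det_fromBlocks_zero₁₂, Matrix.det_fromBlocks_zero₂₁] at hd
  simpa using hd

lemma map_det_aux {m : Type*} [Fintype m] [DecidableEq m] (f : ℝ[X] →+* ℝ[X])
    (M : Matrix m m ℝ[X]) : (M.map ⇑f).det = f M.det :=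
  (RingHom.map_det f M).symm

/-- If λ₁,…,λₙ are the adjacency eigenvalues of a graph `G`, then the
adjacency eigenvalues of the extended double cover `G*` (whose adjacency matrix is
the block matrix `[[0, A+I],[A+I, 0]]`) are `±(λᵢ+1)` for `i = 1,…,n`. -/
theorem stmt0 {n : ℕ} (G : SimpleGraph (Fin n)) (A : Matrix (Fin n) (Fin n) ℝ)
    (hA : A = G.adjMatrix ℝ) (lam : Fin n → ℝ)
    (hspec : A.charpoly = ∏ i, (X - C (lam i))) :
    (Matrix.fromBlocks 0 (A + 1) (A + 1) 0).charpoly =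
      ∏ i, ((X - C (lam i + 1)) * (X + C (lam i + 1))) := by
  set B : Matrix (Fin n) (Fin n) ℝ := A + 1 with hB
  have key : (Matrix.fromBlocks 0 B B 0).charpoly =
      (Matrix.charmatrix (0 : Matrix (Fin n) (Fin n) ℝ) + B.map C).det *
      (Matrix.charmatrix (0 : Matrix (Fin n) (Fin n) ℝ) - B.map C).det := by
    rw [Matrix.charpoly, Matrix.charmatrix_fromBlocks, det_fromBlocks_symm_aux]
    simp only [sub_neg_eq_add, ← sub_eq_add_neg]
  -- ring homs for substitution
  let φ : ℝ[X] →+* ℝ[X] := (aeval (X - 1 : ℝ[X])).toRingHom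
  let ψ : ℝ[X] →+* ℝ[X] := (aeval (-(X + 1) : ℝ[X])).toRingHom
  have hφ : (Matrix.charmatrix (0 : Matrix (Fin n) (Fin n) ℝ) - B.map C) =
      (Matrix.charmatrix A).map φ := by
    ext i j
    by_cases h : i = j <;>
      simp [h, Matrix.charmatrix_apply, Matrix.diagonal_apply, hB, φ, map_sub] <;> ring
  have hψ : (Matrix.charmatrix (0 : Matrix (Fin n) (Fin n) ℝ) + B.map C) =
      -((Matrix.charmatrix A).map ψ) := by
    ext i j
    by_cases h : i = j <;>
      simp [h, Matrix.charmatrix_apply, Matrix.diagonal_apply, hB, ψ, map_sub] <;> ring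
  have hdetφ : ((Matrix.charmatrix A).map ⇑φ).det = ∏ i, (X - C (lam i + 1)) := by
    rw [map_det_aux]
    show φ A.charpoly = _
    rw [hspec, map_prod]
    refine Finset.prod_congr rfl fun i _ => ?_
    simp [φ, map_sub]
    ring
  have hdetψ : (-((Matrix.charmatrix A).map ⇑ψ)).det = ∏ i, (X + C (lam i + 1)) := by
    rw [Matrix.det_neg, map_det_aux]
    have hc : A.charmatrix.det = ∏ i, (X - C (lam i)) := hspec
    rw [hc, map_prod]
    have : ∀ i : Fin n, ψ (X - C (lam i)) = (-1) * (X + C (lam i + 1)) := by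
      intro i; simp [ψ, map_sub]; ring
    rw [Finset.prod_congr rfl fun i _ => this i, Finset.prod_mul_distrib,
      Finset.prod_const, Finset.card_univ, ← mul_assoc, ← mul_pow]
    simp
  rw [key, hψ, hφ, hdetφ, hdetψ, ← Finset.prod_mul_distrib]
  exact Finset.prod_congr rfl fun i _ => mul_comm _ _
end

section
/- Let G be a graph whose every nonzero adjacency eigenvalue λ satisfies |λ| ≥ 2. Then E(G* ⊗ K₂) = E(G**) = 4Σᵢ|λᵢ| + 4θ, where θ is the difference between the number of non-negative and negative adjacency eigenvalues of G. -/
open Matrix Polynomial BigOperators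
open scoped Classical Kronecker

variable {m : Type*} [Fintype m] [DecidableEq m]

lemma charpoly_conj' (V W M : Matrix m m ℝ) (h1 : V * W = 1) :
    (V * M * W).charpoly = M.charpoly := by
  have h2 : W * V = 1 := mul_eq_one_comm.mp h1
  unfold Matrix.charpoly
  have key : charmatrix (V * M * W) =
      (C : ℝ →+* ℝ[X]).mapMatrix V * charmatrix M * (C : ℝ →+* ℝ[X]).mapMatrix W := by
    rw [charmatrix, charmatrix, Matrix.mul_sub, Matrix.sub_mul]
    congr 1
    · rw [scalar_apply, ← Matrix.smul_one_eq_diagonal, mul_smul_comm,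
        smul_mul_assoc, mul_one, ← _root_.map_mul, h1, _root_.map_one,
        Matrix.smul_one_eq_diagonal]
    · rw [← _root_.map_mul, ← _root_.map_mul]
  have hdet : (C.mapMatrix V).det * ((C : ℝ →+* ℝ[X]).mapMatrix W).det = 1 := by
    rw [← det_mul, ← _root_.map_mul, h1, _root_.map_one, det_one]
  rw [key, det_mul, det_mul]
  linear_combination M.charmatrix.det * hdet

lemma charpoly_diagonal' (d : m → ℝ) :
    (Matrix.diagonal d).charpoly = ∏ i, (X - C (d i)) := by
  have : charmatrix (Matrix.diagonal d) = Matrix.diagonal fun i => X - C (d i) := by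
    rw [charmatrix, scalar_apply, RingHom.mapMatrix_apply, Matrix.diagonal_map (by simp),
      Matrix.diagonal_sub]
  rw [Matrix.charpoly, this, det_diagonal]

lemma spectral' {M : Matrix m m ℝ} (hM : M.IsHermitian) :
    M = (hM.eigenvectorUnitary : Matrix m m ℝ) * Matrix.diagonal hM.eigenvalues *
      star (hM.eigenvectorUnitary : Matrix m m ℝ) := by
  have := hM.spectral_theorem
  simpa using this

lemma unitary_mul_star {M : Matrix m m ℝ} (hM : M.IsHermitian) :
    (hM.eigenvectorUnitary : Matrix m m ℝ) * star (hM.eigenvectorUnitary : Matrix m m ℝ) = 1 :=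
  (Matrix.mem_unitaryGroup_iff).mp (hM.eigenvectorUnitary).2

lemma charpoly_hermitian {M : Matrix m m ℝ} (hM : M.IsHermitian) :
    M.charpoly = ∏ i, (X - C (hM.eigenvalues i)) := by
  conv_lhs => rw [spectral' hM]
  rw [charpoly_conj' _ _ _ (unitary_mul_star hM), charpoly_diagonal']

lemma roots_charpoly_hermitian {M : Matrix m m ℝ} (hM : M.IsHermitian) :
    M.charpoly.roots = Finset.univ.val.map hM.eigenvalues := by
  rw [charpoly_hermitian hM, Finset.prod]
  have : Multiset.map (fun i => X - C (hM.eigenvalues i)) Finset.univ.val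
      = Multiset.map (fun a => X - C a) (Multiset.map hM.eigenvalues Finset.univ.val) := by
    rw [Multiset.map_map]; rfl
  rw [this, Polynomial.roots_multiset_prod_X_sub_C]

lemma sum_abs_eig {M : Matrix m m ℝ} (hM : M.IsHermitian) :
    ∑ i, |hM.eigenvalues i| = (M.charpoly.roots.map (fun x => |x|)).sum := by
  rw [roots_charpoly_hermitian hM, Multiset.map_map, Finset.sum]
  rfl

lemma conj_blockdiag (B : Matrix m m ℝ) :
    (Matrix.fromBlocks 1 1 1 (-1) : Matrix (m ⊕ m) (m ⊕ m) ℝ) * Matrix.fromBlocks B 0 0 (-B) *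
      ((1/2 : ℝ) • (Matrix.fromBlocks 1 1 1 (-1) : Matrix (m ⊕ m) (m ⊕ m) ℝ)) =
      Matrix.fromBlocks 0 B B 0 := by
  rw [mul_smul_comm, Matrix.fromBlocks_multiply, Matrix.fromBlocks_multiply,
    Matrix.fromBlocks_smul]
  simp [← add_smul]
  norm_num

lemma PQ_one : (Matrix.fromBlocks 1 1 1 (-1) : Matrix (m ⊕ m) (m ⊕ m) ℝ) *
    ((1/2 : ℝ) • (Matrix.fromBlocks 1 1 1 (-1) : Matrix (m ⊕ m) (m ⊕ m) ℝ)) = 1 := by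
  rw [mul_smul_comm, Matrix.fromBlocks_multiply, Matrix.fromBlocks_smul, ← Matrix.fromBlocks_one]
  simp [← add_smul]
  norm_num

lemma charpoly_antiblock (B : Matrix m m ℝ) :
    (Matrix.fromBlocks 0 B B 0).charpoly = B.charpoly * (-B).charpoly := by
  rw [← conj_blockdiag B, charpoly_conj' _ _ _ PQ_one, Matrix.charpoly_fromBlocks_zero₁₂]

lemma charpoly_antiblock_shift (B : Matrix m m ℝ) :
    (Matrix.fromBlocks 0 B B 0 + 1).charpoly = (B + 1).charpoly * (1 - B).charpoly := by
  have h : Matrix.fromBlocks 0 B B 0 + 1 =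
      (Matrix.fromBlocks 1 1 1 (-1) : Matrix (m ⊕ m) (m ⊕ m) ℝ) *
        Matrix.fromBlocks (B + 1) 0 0 (1 - B) *
        ((1/2 : ℝ) • (Matrix.fromBlocks 1 1 1 (-1) : Matrix (m ⊕ m) (m ⊕ m) ℝ)) := by
    have : Matrix.fromBlocks (B + 1) 0 0 (1 - B) =
        Matrix.fromBlocks B 0 0 (-B) + 1 := by
      rw [← Matrix.fromBlocks_one, Matrix.fromBlocks_add]
      congr 1 <;> abel
    rw [this, Matrix.mul_add, Matrix.add_mul, conj_blockdiag, mul_one, PQ_one]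
  rw [h, charpoly_conj' _ _ _ PQ_one, Matrix.charpoly_fromBlocks_zero₁₂]

lemma charpoly_antiblock_negshift (B : Matrix m m ℝ) :
    (-(Matrix.fromBlocks 0 B B 0 + 1)).charpoly = (-(B + 1)).charpoly * (B - 1).charpoly := by
  have h : -(Matrix.fromBlocks 0 B B 0 + 1) =
      (Matrix.fromBlocks 1 1 1 (-1) : Matrix (m ⊕ m) (m ⊕ m) ℝ) *
        Matrix.fromBlocks (-(B + 1)) 0 0 (B - 1) *
        ((1/2 : ℝ) • (Matrix.fromBlocks 1 1 1 (-1) : Matrix (m ⊕ m) (m ⊕ m) ℝ)) := by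
    have : Matrix.fromBlocks (-(B + 1)) 0 0 (B - 1) =
        -(Matrix.fromBlocks B 0 0 (-B) + 1) := by
      rw [← Matrix.fromBlocks_one, Matrix.fromBlocks_add, Matrix.fromBlocks_neg]
      congr 1 <;> abel
    rw [this, Matrix.mul_neg, Matrix.neg_mul, Matrix.mul_add, Matrix.add_mul, conj_blockdiag,
      mul_one, PQ_one]
  rw [h, charpoly_conj' _ _ _ PQ_one, Matrix.charpoly_fromBlocks_zero₁₂]

def prodFin2Equiv (m : Type*) : m × Fin 2 ≃ m ⊕ m where
  toFun p := if p.2 = 0 then Sum.inl p.1 else Sum.inr p.1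
  invFun s := Sum.elim (fun i => (i, 0)) (fun i => (i, 1)) s
  left_inv := by rintro ⟨i, j⟩; fin_cases j <;> simp
  right_inv := by rintro (i | i) <;> simp

lemma reindex_kron (M : Matrix m m ℝ) :
    Matrix.reindex (prodFin2Equiv m) (prodFin2Equiv m) (M ⊗ₖ !![(0:ℝ), 1; 1, 0]) =
      Matrix.fromBlocks 0 M M 0 := by
  ext s t
  rcases s with i | i <;> rcases t with j | j <;>
    simp [Matrix.reindex_apply, Matrix.submatrix_apply, prodFin2Equiv,
      Matrix.kroneckerMap_apply]

lemma charpoly_kron (M : Matrix m m ℝ) :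
    (M ⊗ₖ !![(0:ℝ), 1; 1, 0]).charpoly = M.charpoly * (-M).charpoly := by
  rw [← Matrix.charpoly_reindex (prodFin2Equiv m) (M ⊗ₖ !![(0:ℝ), 1; 1, 0]),
    reindex_kron, charpoly_antiblock]

lemma charpoly_affine {M : Matrix m m ℝ} (hM : M.IsHermitian) (a b : ℝ) :
    (a • M + b • (1 : Matrix m m ℝ)).charpoly = ∏ i, (X - C (a * hM.eigenvalues i + b)) := by
  have hd : Matrix.diagonal (fun i => a * hM.eigenvalues i + b) =
      a • Matrix.diagonal hM.eigenvalues + b • (1 : Matrix m m ℝ) := by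
    rw [← Matrix.diagonal_one, ← Matrix.diagonal_smul, ← Matrix.diagonal_smul,
      ← Matrix.diagonal_add]
    congr 1
    ext i j
    by_cases h : i = j <;> simp [Matrix.diagonal_apply, h, mul_comm]
  have h : a • M + b • (1 : Matrix m m ℝ) =
      (hM.eigenvectorUnitary : Matrix m m ℝ) *
        Matrix.diagonal (fun i => a * hM.eigenvalues i + b) *
        star (hM.eigenvectorUnitary : Matrix m m ℝ) := by
    rw [hd, Matrix.mul_add, Matrix.add_mul, Matrix.mul_smul, Matrix.smul_mul,
      Matrix.mul_smul, Matrix.smul_mul, mul_one, unitary_mul_star hM, ← spectral' hM]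
  rw [h, charpoly_conj' _ _ _ (unitary_mul_star hM), charpoly_diagonal']

lemma prod_X_sub_C_eq (f : m → ℝ) :
    (∏ i, (X - C (f i))) = ((Finset.univ.val.map f).map (fun a => X - C a)).prod := by
  rw [Multiset.map_map, Finset.prod]; rfl

lemma roots_four (f1 f2 f3 f4 : m → ℝ) :
    ((∏ i, (X - C (f1 i))) * (∏ i, (X - C (f2 i))) *
      ((∏ i, (X - C (f3 i))) * (∏ i, (X - C (f4 i))))).roots =
      Finset.univ.val.map f1 + Finset.univ.val.map f2 +
        (Finset.univ.val.map f3 + Finset.univ.val.map f4) := by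
  rw [prod_X_sub_C_eq f1, prod_X_sub_C_eq f2, prod_X_sub_C_eq f3, prod_X_sub_C_eq f4,
    ← Multiset.prod_add, ← Multiset.prod_add, ← Multiset.prod_add,
    ← Multiset.map_add, ← Multiset.map_add, ← Multiset.map_add,
    Polynomial.roots_multiset_prod_X_sub_C]

lemma sum_abs_multiset (f : m → ℝ) :
    ((Finset.univ.val.map f).map (fun x => |x|)).sum = ∑ i, |f i| := by
  rw [Multiset.map_map, Finset.sum]; rfl

/-- Let `G` be a graph whose every nonzero adjacency eigenvalue `λ`
satisfies `|λ| ≥ 2`.  Then `E(G* ⊗ K₂) = E(G**) = 4·Σᵢ|λᵢ| + 4θ`, where `θ` is the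
difference between the number of non-negative and of negative adjacency eigenvalues
of `G`.  Here `G*` has adjacency matrix `[[0, A+I],[A+I, 0]]` and `G** = (G*)*`. -/
theorem stmt6 {n : ℕ} (G : SimpleGraph (Fin n)) (A : Matrix (Fin n) (Fin n) ℝ)
    (hA : A = G.adjMatrix ℝ) (hHerm : A.IsHermitian)
    (hbig : ∀ i, hHerm.eigenvalues i ≠ 0 → 2 ≤ |hHerm.eigenvalues i|)
    (Astar : Matrix (Fin n ⊕ Fin n) (Fin n ⊕ Fin n) ℝ)
    (hAstar : Astar = Matrix.fromBlocks 0 (A + 1) (A + 1) 0)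
    (hKron : (Astar ⊗ₖ !![(0 : ℝ), 1; 1, 0]).IsHermitian)
    (hStar2 : (Matrix.fromBlocks 0 (Astar + 1) (Astar + 1) 0).IsHermitian)
    (θ : ℝ)
    (hθ : θ = ((Finset.univ.filter fun i => 0 ≤ hHerm.eigenvalues i).card : ℝ) -
        ((Finset.univ.filter fun i => hHerm.eigenvalues i < 0).card : ℝ)) :
    (∑ p, |hKron.eigenvalues p| = ∑ q, |hStar2.eigenvalues q|) ∧
      ∑ p, |hKron.eigenvalues p| = 4 * (∑ i, |hHerm.eigenvalues i|) + 4 * θ := by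
  set lam := hHerm.eigenvalues with hlam
  -- charpolys of the affine pieces
  have e1 : (A + 1).charpoly = ∏ i, (X - C (lam i + 1)) := by
    have h := charpoly_affine hHerm 1 1
    have h2 : (1:ℝ) • A + (1:ℝ) • (1 : Matrix (Fin n) (Fin n) ℝ) = A + 1 := by
      simp
    rw [h2] at h
    rw [h]
    exact Finset.prod_congr rfl fun i _ => by rw [hlam]; ring_nf
  have e2 : (-(A + 1)).charpoly = ∏ i, (X - C (-(lam i + 1))) := by
    have h := charpoly_affine hHerm (-1) (-1)
    have h2 : (-1:ℝ) • A + (-1:ℝ) • (1 : Matrix (Fin n) (Fin n) ℝ) = -(A + 1) := by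
      module
    rw [h2] at h
    rw [h]
    exact Finset.prod_congr rfl fun i _ => by rw [hlam]; ring_nf
  have e3 : ((A + 1) + 1).charpoly = ∏ i, (X - C (lam i + 2)) := by
    have h := charpoly_affine hHerm 1 2
    have h2 : (1:ℝ) • A + (2:ℝ) • (1 : Matrix (Fin n) (Fin n) ℝ) = (A + 1) + 1 := by
      module
    rw [h2] at h
    rw [h]
    exact Finset.prod_congr rfl fun i _ => by rw [hlam]; ring_nf
  have e4 : (1 - (A + 1)).charpoly = ∏ i, (X - C (-(lam i))) := by
    have h := charpoly_affine hHerm (-1) 0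
    have h2 : (-1:ℝ) • A + (0:ℝ) • (1 : Matrix (Fin n) (Fin n) ℝ) = 1 - (A + 1) := by
      simp
    rw [h2] at h
    rw [h]
    exact Finset.prod_congr rfl fun i _ => by rw [hlam]; ring_nf
  have e5 : (-((A + 1) + 1)).charpoly = ∏ i, (X - C (-(lam i + 2))) := by
    have h := charpoly_affine hHerm (-1) (-2)
    have h2 : (-1:ℝ) • A + (-2:ℝ) • (1 : Matrix (Fin n) (Fin n) ℝ) = -((A + 1) + 1) := by
      module
    rw [h2] at h
    rw [h]
    exact Finset.prod_congr rfl fun i _ => by rw [hlam]; ring_nf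
  have e6 : ((A + 1) - 1).charpoly = ∏ i, (X - C (lam i)) := by
    have h := charpoly_affine hHerm 1 0
    have h2 : (1:ℝ) • A + (0:ℝ) • (1 : Matrix (Fin n) (Fin n) ℝ) = (A + 1) - 1 := by
      simp
    rw [h2] at h
    rw [h]
    exact Finset.prod_congr rfl fun i _ => by rw [hlam]; ring_nf
  -- charpoly of the Kronecker matrix
  have hnegAstar : -Astar = Matrix.fromBlocks 0 (-(A+1)) (-(A+1)) 0 := by
    rw [hAstar, Matrix.fromBlocks_neg, neg_zero]
  have cK : (Astar ⊗ₖ !![(0 : ℝ), 1; 1, 0]).charpoly =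
      (∏ i, (X - C (lam i + 1))) * (∏ i, (X - C (-(lam i + 1)))) *
        ((∏ i, (X - C (-(lam i + 1)))) * (∏ i, (X - C (lam i + 1)))) := by
    rw [charpoly_kron, hnegAstar, hAstar, charpoly_antiblock, charpoly_antiblock,
      neg_neg, e1, e2]
  have cS : (Matrix.fromBlocks 0 (Astar + 1) (Astar + 1) 0).charpoly =
      (∏ i, (X - C (lam i + 2))) * (∏ i, (X - C (-(lam i)))) *
        ((∏ i, (X - C (-(lam i + 2)))) * (∏ i, (X - C (lam i)))) := by
    rw [charpoly_antiblock, hAstar, charpoly_antiblock_shift, charpoly_antiblock_negshift,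
      e3, e4, e5, e6]
  -- sums of absolute eigenvalues
  have sumK : ∑ p, |hKron.eigenvalues p| =
      (∑ i, |lam i + 1|) + (∑ i, |(-(lam i + 1))|) +
        ((∑ i, |(-(lam i + 1))|) + (∑ i, |lam i + 1|)) := by
    rw [sum_abs_eig hKron, cK, roots_four]
    simp only [Multiset.map_add, Multiset.sum_add, sum_abs_multiset]
  have sumS : ∑ q, |hStar2.eigenvalues q| =
      (∑ i, |lam i + 2|) + (∑ i, |(-(lam i))|) +
        ((∑ i, |(-(lam i + 2))|) + (∑ i, |lam i|)) := by
    rw [sum_abs_eig hStar2, cS, roots_four]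
    simp only [Multiset.map_add, Multiset.sum_add, sum_abs_multiset]
  -- arithmetic
  have hθε : θ = ∑ i, (if 0 ≤ lam i then (1:ℝ) else -1) := by
    rw [hθ, Finset.card_filter, Finset.card_filter]
    push_cast
    rw [← Finset.sum_sub_distrib]
    refine Finset.sum_congr rfl fun i _ => ?_
    by_cases h : 0 ≤ lam i
    · simp [h, not_lt.mpr h]
    · simp [h, not_le.mp h]
  have habs1 : ∀ i, |lam i + 1| = |lam i| + (if 0 ≤ lam i then (1:ℝ) else -1) := by
    intro i
    by_cases h : 0 ≤ lam i
    · rw [if_pos h, abs_of_nonneg h, abs_of_nonneg (by linarith)]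
    · have h' : lam i < 0 := not_le.mp h
      have h2 : 2 ≤ |lam i| := hbig i (by linarith)
      rw [abs_of_neg h'] at h2
      rw [if_neg h, abs_of_neg h', abs_of_neg (by linarith)]
      ring
  have habs2 : ∀ i, |lam i + 2| = |lam i| + 2 * (if 0 ≤ lam i then (1:ℝ) else -1) := by
    intro i
    by_cases h : 0 ≤ lam i
    · rw [if_pos h, abs_of_nonneg h, abs_of_nonneg (by linarith)]
      ring
    · have h' : lam i < 0 := not_le.mp h
      have h2 : 2 ≤ |lam i| := hbig i (by linarith)
      rw [abs_of_neg h'] at h2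
      rw [if_neg h, abs_of_neg h', abs_of_nonpos (by linarith)]
      ring
  have hs1 : ∑ i, |lam i + 1| = (∑ i, |lam i|) + θ := by
    rw [hθε, ← Finset.sum_add_distrib]
    exact Finset.sum_congr rfl fun i _ => habs1 i
  have hs2 : ∑ i, |lam i + 2| = (∑ i, |lam i|) + 2 * θ := by
    rw [hθε, Finset.mul_sum, ← Finset.sum_add_distrib]
    exact Finset.sum_congr rfl fun i _ => habs2 i
  have K4 : ∑ p, |hKron.eigenvalues p| = 4 * (∑ i, |lam i|) + 4 * θ := by
    rw [sumK]
    have hn : ∑ i, |(-(lam i + 1))| = ∑ i, |lam i + 1| :=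
      Finset.sum_congr rfl fun i _ => abs_neg _
    rw [hn]
    linarith [hs1]
  have S4 : ∑ q, |hStar2.eigenvalues q| = 4 * (∑ i, |lam i|) + 4 * θ := by
    rw [sumS]
    have hn1 : ∑ i, |(-(lam i))| = ∑ i, |lam i| :=
      Finset.sum_congr rfl fun i _ => abs_neg _
    have hn2 : ∑ i, |(-(lam i + 2))| = ∑ i, |lam i + 2| :=
      Finset.sum_congr rfl fun i _ => abs_neg _
    rw [hn1, hn2]
    linarith [hs2]
  exact ⟨K4.trans S4.symm, K4⟩
end

section
/- Let G be a graph with Laplacian eigenvalues μ₁,...,μₙ and signless Laplacian eigenvalues μ₁⁺,...,μₙ⁺. Then the Laplacian eigenvalues of the extended double cover G* are μ₁,...,μₙ, μ₁⁺+2,...,μₙ⁺+2; equivalently, the Laplacian characteristic polynomial of G* factors as C_{G*}(λ) = Q_G(λ−2)·C_G(λ), where C_G and Q_G are the Laplacian and signless Laplacian characteristic polynomials of G. -/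
open Matrix Polynomial BigOperators
open scoped Classical

lemma det_fromBlocks_sym {m : Type*} [DecidableEq m] [Fintype m] {R : Type*} [CommRing R]
    (M N : Matrix m m R) :
    (Matrix.fromBlocks M N N M).det = (M + N).det * (M - N).det := by
  have key : Matrix.fromBlocks (1 : Matrix m m R) 0 (-1) 1 *
      (Matrix.fromBlocks M N N M * Matrix.fromBlocks (1 : Matrix m m R) 0 1 1) =
      Matrix.fromBlocks (M + N) N 0 (M - N) := by
    rw [Matrix.fromBlocks_multiply, Matrix.fromBlocks_multiply]
    congr 1 <;> noncomm_ring <;> simp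
  have hdet := congrArg Matrix.det key
  simp only [Matrix.det_mul, Matrix.det_fromBlocks_zero₁₂,
    Matrix.det_fromBlocks_zero₂₁, Matrix.det_one, one_mul, mul_one] at hdet
  simpa using hdet

lemma charpoly_fromBlocks_sym {m : Type*} [DecidableEq m] [Fintype m] {R : Type*} [CommRing R]
    (M N : Matrix m m R) :
    (Matrix.fromBlocks M N N M).charpoly = (M + N).charpoly * (M - N).charpoly := by
  rw [Matrix.charpoly, Matrix.charmatrix_fromBlocks, det_fromBlocks_sym]
  have h1 : Matrix.charmatrix M + -N.map C = Matrix.charmatrix (M + N) := by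
    ext i j
    by_cases h : i = j <;>
      simp [h, Matrix.charmatrix_apply, Matrix.diagonal, Matrix.map_apply, sub_add_eq_sub_sub] <;>
      ring
  have h2 : Matrix.charmatrix M - -N.map C = Matrix.charmatrix (M - N) := by
    ext i j
    by_cases h : i = j <;>
      simp [h, Matrix.charmatrix_apply, Matrix.diagonal, Matrix.map_apply, sub_sub_eq_add_sub] <;>
      ring
  rw [h1, h2, Matrix.charpoly, Matrix.charpoly]

lemma charpoly_add_smul_one {m : Type*} [DecidableEq m] [Fintype m] {R : Type*} [CommRing R]
    (M : Matrix m m R) (c : R) :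
    (M + c • (1 : Matrix m m R)).charpoly = M.charpoly.comp (X - C c) := by
  have hcomp : M.charpoly.comp (X - C c) = eval₂ C (X - C c) M.charpoly := rfl
  rw [hcomp, Matrix.charpoly, ← Polynomial.coe_eval₂RingHom, Matrix.charpoly,
    RingHom.map_det, RingHom.mapMatrix_apply]
  congr 1
  ext i j
  by_cases h : i = j <;>
    simp [h, Matrix.charmatrix_apply, Matrix.diagonal, Matrix.map_apply, Matrix.one_apply,
      sub_sub] <;> ring

/-- For a graph `G` with Laplacian `L = D − A` and signless Laplacian
`Q = D + A`, the Laplacian of the extended double cover `G*` is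
`[[D+I, −(A+I)],[−(A+I), D+I]]`, and its characteristic polynomial factors as
`C_{G*}(λ) = Q_G(λ−2)·C_G(λ)`; equivalently, if the Laplacian eigenvalues of `G`
are `μᵢ` and the signless Laplacian eigenvalues are `μᵢ⁺`, then the Laplacian
eigenvalues of `G*` are the `μᵢ` together with the `μᵢ⁺ + 2`. -/
theorem stmt8 {n : ℕ} (G : SimpleGraph (Fin n))
    (A D L Q : Matrix (Fin n) (Fin n) ℝ)
    (hA : A = G.adjMatrix ℝ)
    (hD : D = Matrix.diagonal fun i => (G.degree i : ℝ))
    (hL : L = D - A) (hQ : Q = D + A) :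
    (Matrix.fromBlocks (D + 1) (-(A + 1)) (-(A + 1)) (D + 1)).charpoly =
      Q.charpoly.comp (X - C 2) * L.charpoly := by
  rw [charpoly_fromBlocks_sym]
  have e1 : D + 1 + -(A + 1) = L := by rw [hL]; abel
  have e2 : D + 1 - -(A + 1) = Q + (2 : ℝ) • (1 : Matrix (Fin n) (Fin n) ℝ) := by
    rw [hQ]; module
  rw [e1, e2, charpoly_add_smul_one, mul_comm]
end

section
/- Let G be a graph on n vertices with m edges and Laplacian eigenvalues μ₁,...,μₙ. The Laplacian spectrum of the k-fold graph D^k[G] is kμ₁,...,kμₙ together with kdᵢ for each vertex degree dᵢ, each with multiplicity (k−1) per vertex (i.e., kd₁,...,kdₙ each repeated k−1 times). -/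
open Matrix Polynomial BigOperators
open scoped Classical

/-- The k-fold graph `D^k[G]`: k copies of `G` where each vertex in one copy is
joined to the neighbours of the corresponding vertices in all copies. -/
def kfold {V : Type*} (G : SimpleGraph V) (k : ℕ) : SimpleGraph (V × Fin k) where
  Adj u v := G.Adj u.1 v.1
  symm := ⟨fun _ _ h => G.adj_symm h⟩
  loopless := ⟨fun u h => G.irrefl h⟩

/-- The Laplacian matrix `L = D − A` of a graph. -/
noncomputable def lap {V : Type*} [Fintype V] [DecidableEq V] (G : SimpleGraph V) :
    Matrix V V ℝ :=
  Matrix.diagonal (fun i => (G.degree i : ℝ)) - G.adjMatrix ℝ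

open scoped Kronecker

-- charpoly invariant under conjugation
lemma my_charpoly_conj {m : Type*} [Fintype m] [DecidableEq m]
    (M P Q : Matrix m m ℝ) (h : Q * P = 1) :
    (Q * M * P).charpoly = M.charpoly := by
  have h2 : P * Q = 1 := mul_eq_one_comm.mp h
  have hc : charmatrix (Q * M * P) = Q.map C * charmatrix M * P.map C := by
    rw [charmatrix, charmatrix]
    have hQP : (Q.map C) * (P.map C) = (1 : Matrix m m ℝ[X]) := by
      rw [← Matrix.map_mul, h, Matrix.map_one C (map_zero C) (map_one C)]
    have hPQ : (P.map C) * (Q.map C) = (1 : Matrix m m ℝ[X]) := mul_eq_one_comm.mp hQP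
    have hX : (Matrix.scalar m (X : ℝ[X])) = (X : ℝ[X]) • (1 : Matrix m m ℝ[X]) := by
      ext i j; by_cases hij : i = j <;> simp [hij, Matrix.one_apply]
    rw [mul_sub, sub_mul, hX]
    congr 1
    · rw [mul_smul_comm, smul_mul_assoc, mul_one, hQP]
    · simp only [RingHom.mapMatrix_apply]
      rw [← Matrix.map_mul, ← Matrix.map_mul]
  have hdet : (Q.map C).det * (P.map C).det = 1 := by
    rw [← det_mul, ← Matrix.map_mul, h, Matrix.map_one C (map_zero C) (map_one C), det_one]
  rw [Matrix.charpoly, Matrix.charpoly, hc, det_mul, det_mul, mul_right_comm, hdet, one_mul]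

lemma my_charpoly_blockDiagonal {m o : Type*} [Fintype m] [DecidableEq m] [Fintype o]
    [DecidableEq o] (M : o → Matrix m m ℝ) :
    (blockDiagonal M).charpoly = ∏ a, (M a).charpoly := by
  unfold Matrix.charpoly
  have : charmatrix (blockDiagonal M) = blockDiagonal (fun a => charmatrix (M a)) := by
    ext ⟨i, a⟩ ⟨j, b⟩
    by_cases hab : a = b
    · subst hab
      by_cases hij : i = j
      · subst hij; simp [blockDiagonal_apply]
      · simp [blockDiagonal_apply, charmatrix_apply, Matrix.diagonal, hij]
    · simp [blockDiagonal_apply, charmatrix_apply, Matrix.diagonal, hab, Prod.ext_iff]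
  rw [this, det_blockDiagonal]

lemma my_charpoly_diagonal {m : Type*} [Fintype m] [DecidableEq m] (v : m → ℝ) :
    (Matrix.diagonal v).charpoly = ∏ i, (X - C (v i)) := by
  unfold Matrix.charpoly
  have : charmatrix (Matrix.diagonal v) = Matrix.diagonal (fun i => X - C (v i)) := by
    ext i j
    by_cases hij : i = j
    · subst hij; simp
    · simp [charmatrix_apply, Matrix.diagonal, hij]
  rw [this, det_diagonal]

lemma my_comp_inj (c : ℝ) (hc : c ≠ 0) {p q : ℝ[X]}
    (h : p.comp (C c * X) = q.comp (C c * X)) : p = q := by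
  have h2 := congrArg (fun r : ℝ[X] => r.comp (C c⁻¹ * X)) h
  simp only [Polynomial.comp_assoc] at h2
  have hX : (C c * X).comp (C c⁻¹ * X) = (X : ℝ[X]) := by
    rw [mul_comp, C_comp, X_comp, ← mul_assoc, ← C_mul, mul_inv_cancel₀ hc, Polynomial.C_1, one_mul]
  rwa [hX, comp_X, comp_X] at h2

lemma my_charpoly_smul {n : ℕ} (M : Matrix (Fin n) (Fin n) ℝ) (c : ℝ) (hc : c ≠ 0)
    (μ : Fin n → ℝ) (h : M.charpoly = ∏ i, (X - C (μ i))) :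
    (c • M).charpoly = ∏ i, (X - C (c * μ i)) := by
  apply my_comp_inj c hc
  have hφ : ∀ p : ℝ[X], p.comp (C c * X) = eval₂RingHom C (C c * X) p := fun p => rfl
  rw [hφ, hφ]
  rw [Matrix.charpoly, RingHom.map_det]
  have hmat : (charmatrix (c • M)).map (eval₂RingHom C (C c * X)) = C c • charmatrix M := by
    ext i j
    by_cases hij : i = j
    · subst hij
      rw [Matrix.map_apply, Matrix.smul_apply, charmatrix_apply_eq, charmatrix_apply_eq,
        Matrix.smul_apply, smul_eq_mul, smul_eq_mul]
      simp only [map_sub, coe_eval₂RingHom, eval₂_X, eval₂_C, eval₂_mul, C_mul]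
      ring
    · rw [Matrix.map_apply, Matrix.smul_apply, charmatrix_apply_ne _ _ _ hij,
        charmatrix_apply_ne _ _ _ hij, Matrix.smul_apply, smul_eq_mul, smul_eq_mul]
      simp only [map_neg, coe_eval₂RingHom, eval₂_C, eval₂_mul, C_mul]
      ring
  rw [RingHom.mapMatrix_apply, hmat, Matrix.det_smul,
    show M.charmatrix.det = M.charpoly from rfl, h, map_prod]
  simp only [map_sub, coe_eval₂RingHom, eval₂_X, eval₂_C]
  have : (C c : ℝ[X]) ^ Fintype.card (Fin n) = ∏ _i : Fin n, C c := by
    rw [Finset.prod_const, Finset.card_univ]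
  rw [this, ← Finset.prod_mul_distrib]
  refine Finset.prod_congr rfl fun i _ => ?_
  rw [C_mul]
  ring

/-- Let `G` be a graph on `n` vertices with Laplacian eigenvalues
`μ₁,…,μₙ` and vertex degrees `d₁,…,dₙ`.  The Laplacian spectrum of the k-fold graph
`D^k[G]` is `kμ₁,…,kμₙ` together with `kd₁,…,kdₙ`, each degree value repeated
`k−1` times. -/
theorem stmt16 {n : ℕ} (G : SimpleGraph (Fin n)) (μ : Fin n → ℝ)
    (hspec : (lap G).charpoly = ∏ i, (X - C (μ i))) (k : ℕ) (hk : 1 ≤ k) :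
    (lap (kfold G k)).charpoly =
      (∏ i, (X - C ((k : ℝ) * μ i))) *
        ∏ i, (X - C ((k : ℝ) * (G.degree i : ℝ))) ^ (k - 1) := by
  haveI : NeZero k := ⟨by omega⟩
  have hkR : (k : ℝ) ≠ 0 := Nat.cast_ne_zero.mpr (by omega)
  -- degrees of the k-fold graph
  have hdeg : ∀ (i : Fin n) (a : Fin k), (kfold G k).degree (i, a) = k * G.degree i := by
    intro i a
    have hnb : (kfold G k).neighborFinset (i, a) =
        G.neighborFinset i ×ˢ (Finset.univ : Finset (Fin k)) := by
      ext ⟨j, b⟩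
      rw [SimpleGraph.mem_neighborFinset, Finset.mem_product]
      simp [kfold]
    rw [SimpleGraph.degree, hnb, Finset.card_product, Finset.card_univ, Fintype.card_fin,
      mul_comm, SimpleGraph.degree]
  -- notation
  set A : Matrix (Fin n) (Fin n) ℝ := G.adjMatrix ℝ with hA
  set Dm : Matrix (Fin n) (Fin n) ℝ :=
    Matrix.diagonal (fun i => (k : ℝ) * (G.degree i : ℝ)) with hDm
  set J : Matrix (Fin k) (Fin k) ℝ := Matrix.of fun _ _ => 1 with hJ
  -- Laplacian of the k-fold graph as a Kronecker combination
  have hlap : lap (kfold G k) = Dm ⊗ₖ (1 : Matrix (Fin k) (Fin k) ℝ) - A ⊗ₖ J := by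
    ext ⟨i, a⟩ ⟨j, b⟩
    simp only [lap, Matrix.sub_apply, Matrix.kroneckerMap_apply, hDm, hJ, hA,
      Matrix.of_apply, Matrix.one_apply, SimpleGraph.adjMatrix_apply, mul_one]
    have hadj : ∀ (i j : Fin n) (a b : Fin k), (kfold G k).Adj (i, a) (j, b) ↔ G.Adj i j :=
      fun _ _ _ _ => Iff.rfl
    by_cases hij : i = j <;> by_cases hab : a = b <;>
      simp [Matrix.diagonal_apply, Prod.ext_iff, hij, hab, hadj, hdeg, mul_comm,
        SimpleGraph.irrefl] <;> push_cast <;> ring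
  -- change-of-basis matrices on the Fin k factor
  set S : Matrix (Fin k) (Fin k) ℝ :=
    Matrix.of fun j b => if b = 0 then 1 else (if j = 0 then 1 else 0) - (if j = b then 1 else 0)
    with hS
  set T : Matrix (Fin k) (Fin k) ℝ :=
    Matrix.of fun a j => (k : ℝ)⁻¹ - (if a = 0 then 0 else if j = a then 1 else 0) with hT
  have hsumT : ∀ a : Fin k, ∑ j, T a j = if a = 0 then 1 else 0 := by
    intro a
    simp only [hT, Matrix.of_apply, Finset.sum_sub_distrib, Finset.sum_const, Finset.card_univ,
      Fintype.card_fin, nsmul_eq_mul]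
    by_cases ha : a = 0
    · simp [ha, mul_inv_cancel₀ hkR]
    · simp [ha, Finset.sum_ite_eq' Finset.univ a, mul_inv_cancel₀ hkR]
  have hTS : T * S = 1 := by
    ext a b
    rw [Matrix.mul_apply]
    by_cases hb : b = 0
    · subst hb
      have hS0 : ∀ x : Fin k, S x 0 = 1 := fun x => by simp [hS]
      simp only [hS0, mul_one]
      rw [hsumT a, Matrix.one_apply]
    · simp only [hS, Matrix.of_apply, if_neg hb, mul_sub, mul_ite, mul_one, mul_zero,
        Finset.sum_sub_distrib, Finset.sum_ite_eq' Finset.univ, Finset.mem_univ, if_true]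
      simp only [hT, Matrix.of_apply, Matrix.one_apply]
      by_cases ha0 : a = 0
      · simp [ha0, Ne.symm hb, hb]
      · by_cases hab : a = b
        · simp [hab, ha0, Ne.symm ha0, Ne.symm hb, hb]
        · rw [if_neg (fun h : b = a => hab h.symm), if_neg (fun h : (0 : Fin k) = a => ha0 h.symm)]
          simp [ha0, hab]
  -- J * S and T * J * S
  set E : Matrix (Fin k) (Fin k) ℝ :=
    Matrix.diagonal (fun a => if a = 0 then (k : ℝ) else 0) with hE
  have hJS : J * S = Matrix.of fun _ b => if b = 0 then (k : ℝ) else 0 := by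
    ext a b
    rw [Matrix.mul_apply]
    simp only [hJ, hS, Matrix.of_apply, one_mul]
    by_cases hb : b = 0
    · simp [hb]
    · simp [hb, Finset.sum_sub_distrib, Finset.sum_ite_eq' Finset.univ]
  have hTJS : T * (J * S) = E := by
    rw [hJS]
    ext a b
    rw [Matrix.mul_apply, hE, Matrix.diagonal_apply]
    by_cases hb : b = 0
    · subst hb
      simp only [Matrix.of_apply, if_pos rfl]
      rw [← Finset.sum_mul, hsumT a]
      by_cases ha : a = 0
      · simp [ha]
      · simp [ha]
    · by_cases hab : a = b
      · subst hab
        simp [hb]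
      · simp [hb, hab]
  -- conjugation
  have hQP : ((1 : Matrix (Fin n) (Fin n) ℝ) ⊗ₖ T) * ((1 : Matrix (Fin n) (Fin n) ℝ) ⊗ₖ S)
      = 1 := by
    rw [← Matrix.mul_kronecker_mul, one_mul, hTS, Matrix.one_kronecker_one]
  set N : Matrix (Fin n × Fin k) (Fin n × Fin k) ℝ :=
    Matrix.blockDiagonal (fun a : Fin k =>
      if a = 0 then ((k : ℝ) • lap G) else Dm) with hN
  have hconj : ((1 : Matrix (Fin n) (Fin n) ℝ) ⊗ₖ T) * lap (kfold G k) *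
      ((1 : Matrix (Fin n) (Fin n) ℝ) ⊗ₖ S) = N := by
    rw [hlap, Matrix.mul_sub, Matrix.sub_mul, ← Matrix.mul_kronecker_mul,
      ← Matrix.mul_kronecker_mul, ← Matrix.mul_kronecker_mul, ← Matrix.mul_kronecker_mul]
    simp only [Matrix.one_mul, Matrix.mul_one]
    rw [hTS, mul_assoc, hTJS]
    -- identify with the block diagonal matrix
    ext ⟨i, a⟩ ⟨j, b⟩
    simp only [Matrix.sub_apply, Matrix.kroneckerMap_apply, hN, Matrix.blockDiagonal_apply]
    by_cases hab : a = b
    · subst hab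
      by_cases ha : a = 0
      · subst ha
        simp only [if_pos rfl, hE, Matrix.diagonal_apply_eq, Matrix.one_apply_eq, mul_one,
          Matrix.smul_apply, lap, Matrix.sub_apply, smul_eq_mul]
        by_cases hij : i = j <;>
          simp [hDm, hA, Matrix.diagonal_apply, hij, mul_sub]
      · simp only [if_neg ha, hE, Matrix.diagonal_apply_eq, if_neg ha, mul_zero,
          Matrix.one_apply_eq, mul_one, sub_zero]
        by_cases hij : i = j <;> simp [hDm, Matrix.diagonal_apply, hij]
    · simp [hab, hE, Matrix.diagonal_apply, hab]
  -- assemble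
  have hinv : (lap (kfold G k)).charpoly = N.charpoly := by
    have h1 := my_charpoly_conj (lap (kfold G k))
      ((1 : Matrix (Fin n) (Fin n) ℝ) ⊗ₖ S) ((1 : Matrix (Fin n) (Fin n) ℝ) ⊗ₖ T) hQP
    rw [hconj] at h1
    exact h1.symm
  rw [hinv, hN, my_charpoly_blockDiagonal,
    ← Finset.mul_prod_erase Finset.univ _ (Finset.mem_univ (0 : Fin k))]
  congr 1
  · rw [if_pos rfl]
    exact my_charpoly_smul (lap G) k hkR μ hspec
  · have hrest : ∀ a ∈ Finset.univ.erase (0 : Fin k),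
        (if a = 0 then ((k : ℝ) • lap G) else Dm).charpoly =
          ∏ i, (X - C ((k : ℝ) * (G.degree i : ℝ))) := by
      intro a ha
      rw [if_neg (Finset.ne_of_mem_erase ha), hDm, my_charpoly_diagonal]
    rw [Finset.prod_congr rfl hrest, Finset.prod_const,
      Finset.card_erase_of_mem (Finset.mem_univ _), Finset.card_univ, Fintype.card_fin,
      ← Finset.prod_pow]
end
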